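/- Let N, M: A → B be quantum channels, let G be a finite group with unitary representations g ↦ U(g) on ℂ^{|A|} and g ↦ V(g) on ℂ^{|B|}, and let p_G be a probability distribution on G. Let ρ_A be a density matrix with purification φ^ρ_{RA}, let ρ̄_A = ∑_{g} p_G(g) U(g) ρ_A U(g)†, and let φ^{ρ̄}_{RA} be any purification of ρ̄_A. For g ∈ G write N^g(σ) = V(g)† N(U(g) σ U(g)†) V(g), and similarly M^g. If D is a generalized divergence satisfying the direct-sum property on classical–quantum states, then D((id_R ⊗ N)(φ^{ρ̄}_{RA}) ‖ (id_R ⊗ M)(φ^{ρ̄}_{RA})) ≥ ∑_{g} p_G(g) · D((id_R ⊗ N^g)(φ^ρ_{RA}) ‖ (id_R ⊗ M^g)(φ^ρ_{RA})). -/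

import Mathlib

open scoped BigOperators Kronecker ComplexOrder
open Matrix MeasureTheory Filter

noncomputable section

abbrev Mat (n : ℕ) := Matrix (Fin n) (Fin n) ℂ

/-- A density matrix: positive semidefinite with unit trace. -/
def IsDensity {ι : Type} [Fintype ι] (ρ : Matrix ι ι ℂ) : Prop :=
  ρ.PosSemidef ∧ ρ.trace = 1

/-- The trace norm ‖M‖₁ = tr √(MᴴM). -/
def traceNorm {ι : Type} [Fintype ι] [DecidableEq ι] (M : Matrix ι ι ℂ) : ℝ :=
  ((Matrix.posSemidef_conjTranspose_mul_self M).1.eigenvectorUnitary.1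
    * Matrix.diagonal (((↑) : ℝ → ℂ) ∘ Real.sqrt ∘ (Matrix.posSemidef_conjTranspose_mul_self M).1.eigenvalues)
    * (star (Matrix.posSemidef_conjTranspose_mul_self M).1.eigenvectorUnitary : Matrix ι ι ℂ)).trace.re

/-- The rank-one operator |v⟩⟨v| associated to a vector. -/
def vecState {ι : Type} (v : ι → ℂ) : Matrix ι ι ℂ :=
  Matrix.of fun i j => v i * star (v j)

/-- Partial trace over the first tensor factor. -/
def ptraceLeft {R A : Type} [Fintype R] (M : Matrix (R × A) (R × A) ℂ) : Matrix A A ℂ :=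
  Matrix.of fun a a' => ∑ r, M (r, a) (r, a')

/-- Partial trace over the second tensor factor. -/
def ptraceRight {A E : Type} [Fintype E] (M : Matrix (A × E) (A × E) ℂ) : Matrix A A ℂ :=
  Matrix.of fun a a' => ∑ e, M (a, e) (a', e)

/-- The extension id_R ⊗ Φ of a linear map on matrices. -/
def idTensor {R A B : Type} (Φ : Matrix A A ℂ →ₗ[ℂ] Matrix B B ℂ) :
    Matrix (R × A) (R × A) ℂ →ₗ[ℂ] Matrix (R × B) (R × B) ℂ where
  toFun M := Matrix.of fun p q => Φ (Matrix.of fun a a' => M (p.1, a) (q.1, a')) p.2 q.2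
  map_add' M N := by
    ext p q
    have h : (Matrix.of fun a a' => M (p.1, a) (q.1, a') + N (p.1, a) (q.1, a'))
        = (Matrix.of fun a a' => M (p.1, a) (q.1, a'))
          + (Matrix.of fun a a' => N (p.1, a) (q.1, a')) := by
      ext a a'; simp [Matrix.add_apply]
    simp only [Matrix.of_apply, Matrix.add_apply]
    rw [h, map_add]
    simp [Matrix.add_apply]
  map_smul' c M := by
    ext p q
    have h : (Matrix.of fun a a' => c • M (p.1, a) (q.1, a'))
        = c • (Matrix.of fun a a' => M (p.1, a) (q.1, a')) := by
      ext a a'; simp [Matrix.smul_apply]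
    simp only [Matrix.of_apply, Matrix.smul_apply]
    rw [h, Φ.map_smul]
    simp [Matrix.smul_apply]

/-- A linear map is completely positive and trace preserving (a quantum channel). -/
def IsCPTP {A B : Type} [Fintype A] [Fintype B] (Φ : Matrix A A ℂ →ₗ[ℂ] Matrix B B ℂ) : Prop :=
  (∀ (r : ℕ) (M : Matrix (Fin r × A) (Fin r × A) ℂ), M.PosSemidef → (idTensor Φ M).PosSemidef)
    ∧ ∀ M : Matrix A A ℂ, (Φ M).trace = M.trace

/-- The tensor product Φ ⊗ Ψ of two linear maps on matrices. -/
def tensorMap {A B C D : Type} [Fintype A] [DecidableEq A] [Fintype C]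
    (Φ : Matrix A A ℂ →ₗ[ℂ] Matrix B B ℂ) (Ψ : Matrix C C ℂ →ₗ[ℂ] Matrix D D ℂ) :
    Matrix (A × C) (A × C) ℂ →ₗ[ℂ] Matrix (B × D) (B × D) ℂ where
  toFun M := Matrix.of fun p q => ∑ a : A, ∑ a' : A,
      Φ (Matrix.single a a' 1) p.1 q.1
        * Ψ (Matrix.of fun c c' => M (a, c) (a', c')) p.2 q.2
  map_add' M N := by
    ext p q
    have h : ∀ a a' : A, (Matrix.of fun c c' => M (a, c) (a', c') + N (a, c) (a', c'))
        = (Matrix.of fun c c' => M (a, c) (a', c'))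
          + (Matrix.of fun c c' => N (a, c) (a', c')) := by
      intro a a'; ext c c'; simp [Matrix.add_apply]
    simp only [Matrix.of_apply, Matrix.add_apply]
    rw [← Finset.sum_add_distrib]
    refine Finset.sum_congr rfl fun a _ => ?_
    rw [← Finset.sum_add_distrib]
    refine Finset.sum_congr rfl fun a' _ => ?_
    rw [h a a', map_add]
    simp [Matrix.add_apply, mul_add]
  map_smul' k M := by
    ext p q
    have h : ∀ a a' : A, (Matrix.of fun c c' => k * M (a, c) (a', c'))
        = k • (Matrix.of fun c c' => M (a, c) (a', c')) := by
      intro a a'; ext c c'; simp [Matrix.smul_apply, smul_eq_mul]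
    simp only [Matrix.of_apply, Matrix.smul_apply, smul_eq_mul, RingHom.id_apply]
    rw [Finset.mul_sum]
    refine Finset.sum_congr rfl fun a _ => ?_
    rw [Finset.mul_sum]
    refine Finset.sum_congr rfl fun a' _ => ?_
    rw [h a a', Ψ.map_smul]
    simp only [Matrix.smul_apply, smul_eq_mul]
    ring
  
/-- The n-fold tensor power Φ^{⊗n} of a linear map on matrices. -/
def powMap {A B : Type} [Fintype A] [DecidableEq A] [Fintype B] [DecidableEq B]
    (Φ : Matrix A A ℂ →ₗ[ℂ] Matrix B B ℂ) :
    (n : ℕ) → (Matrix (Fin n → A) (Fin n → A) ℂ →ₗ[ℂ] Matrix (Fin n → B) (Fin n → B) ℂ)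
  | 0 => (Matrix.reindexLinearEquiv ℂ ℂ (Equiv.ofUnique (Fin 0 → A) (Fin 0 → B))
      (Equiv.ofUnique (Fin 0 → A) (Fin 0 → B))).toLinearMap
  | (n + 1) =>
      (Matrix.reindexLinearEquiv ℂ ℂ (Fin.insertNthEquiv (fun _ => B) 0).symm.symm
          (Fin.insertNthEquiv (fun _ => B) 0).symm.symm).toLinearMap
        ∘ₗ tensorMap Φ (powMap Φ n)
        ∘ₗ (Matrix.reindexLinearEquiv ℂ ℂ (Fin.insertNthEquiv (fun _ => A) 0).symm
          (Fin.insertNthEquiv (fun _ => A) 0).symm).toLinearMap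

open scoped Classical in
/-- The von Neumann entropy (base 2), via the eigenvalues of a Hermitian matrix. -/
def vnEntropy {ι : Type} [Fintype ι] [DecidableEq ι] (ρ : Matrix ι ι ℂ) : ℝ :=
  if h : ρ.IsHermitian then ∑ i, -(h.eigenvalues i * Real.logb 2 (h.eigenvalues i)) else 0

/-- The function g(ε) = (1+ε)log₂(1+ε) − ε log₂ ε (with the convention 0·log 0 = 0). -/
def gfun (x : ℝ) : ℝ := (1 + x) * Real.logb 2 (1 + x) - x * Real.logb 2 x

/-- A finite ensemble of density matrices. -/
structure Ensemble (A : Type) [Fintype A] where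
  m : ℕ
  p : Fin m → ℝ
  p_nonneg : ∀ i, 0 ≤ p i
  p_sum : ∑ i, p i = 1
  ρ : Fin m → Matrix A A ℂ
  ρ_density : ∀ i, IsDensity (ρ i)

/-- A finite ensemble of pure states, given by unit vectors. -/
structure PureEnsemble (A : Type) [Fintype A] where
  m : ℕ
  p : Fin m → ℝ
  p_nonneg : ∀ i, 0 ≤ p i
  p_sum : ∑ i, p i = 1
  v : Fin m → (A → ℂ)
  pure : ∀ i, IsDensity (vecState (v i))

/-- The Holevo information of a (channel given as a) linear map. -/
def holevoMap {A B : Type} [Fintype A] [Fintype B] [DecidableEq B]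
    (Φ : Matrix A A ℂ →ₗ[ℂ] Matrix B B ℂ) : ℝ :=
  ⨆ e : Ensemble A,
    (vnEntropy (Φ (∑ i, (e.p i : ℂ) • e.ρ i)) - ∑ i, e.p i * vnEntropy (Φ (e.ρ i)))

/-- The classical capacity: the regularized Holevo information. -/
def classicalCapacity {A B : Type} [Fintype A] [DecidableEq A] [Fintype B] [DecidableEq B]
    (Φ : Matrix A A ℂ →ₗ[ℂ] Matrix B B ℂ) : ℝ :=
  Filter.limsup (fun n : ℕ => holevoMap (powMap Φ n) / (n : ℝ)) Filter.atTop

/-- Half the diamond norm of the difference of two maps: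
the supremum over reference sizes and density inputs of half the output trace distance. -/
def diamondDist {A B : Type} [Fintype A] [Fintype B] [DecidableEq B]
    (Φ Ψ : Matrix A A ℂ →ₗ[ℂ] Matrix B B ℂ) : ℝ :=
  ⨆ r : ℕ, ⨆ ρ : {ρ : Matrix (Fin r × A) (Fin r × A) ℂ // IsDensity ρ},
    (1 / 2) * traceNorm (idTensor Φ ρ.1 - idTensor Ψ ρ.1)

/-- The diamond norm of the difference of two maps (without the factor 1/2). -/
def diamondDistFull {A B : Type} [Fintype A] [Fintype B] [DecidableEq B]
    (Φ Ψ : Matrix A A ℂ →ₗ[ℂ] Matrix B B ℂ) : ℝ :=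
  ⨆ r : ℕ, ⨆ ρ : {ρ : Matrix (Fin r × A) (Fin r × A) ℂ // IsDensity ρ},
    traceNorm (idTensor Φ ρ.1 - idTensor Ψ ρ.1)

/-- Conjugation ρ ↦ W ρ Wᴴ as a linear map. -/
def conjMap {ι κ : Type} [Fintype ι] [Fintype κ] (W : Matrix κ ι ℂ) :
    Matrix ι ι ℂ →ₗ[ℂ] Matrix κ κ ℂ where
  toFun ρ := W * ρ * Wᴴ
  map_add' ρ σ := by simp [Matrix.mul_add, Matrix.add_mul]
  map_smul' c ρ := by simp [Matrix.mul_smul, Matrix.smul_mul]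

/-- A classical–quantum state ∑ₓ p(x) |x⟩⟨x| ⊗ ρ(x). -/
def cqState {X ι : Type} [DecidableEq X] (p : X → ℝ) (ρ : X → Matrix ι ι ℂ) :
    Matrix (X × ι) (X × ι) ℂ :=
  Matrix.of fun a b => if a.1 = b.1 then (p a.1 : ℂ) * ρ a.1 a.2 b.2 else 0

/-- A generalized divergence: a family of real functionals on pairs of matrices, one for each
finite-dimensional system, satisfying the data-processing inequality under quantum channels. -/
structure GenDivergence where
  D : ∀ {ι : Type} [Fintype ι] [DecidableEq ι], Matrix ι ι ℂ → Matrix ι ι ℂ → ℝ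
  data_proc : ∀ {ι κ : Type} [Fintype ι] [DecidableEq ι] [Fintype κ] [DecidableEq κ]
      (Λ : Matrix ι ι ℂ →ₗ[ℂ] Matrix κ κ ℂ), IsCPTP Λ →
      ∀ ρ σ : Matrix ι ι ℂ, IsDensity ρ → σ.PosSemidef → D (Λ ρ) (Λ σ) ≤ D ρ σ

/-- The direct-sum property of a generalized divergence on classical–quantum states. -/
def HasDirectSum (𝒟 : GenDivergence) : Prop :=
  ∀ {X ι : Type} [Fintype X] [DecidableEq X] [Fintype ι] [DecidableEq ι]
    (p : X → ℝ), (∀ x, 0 ≤ p x) → (∑ x, p x) = 1 →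
    ∀ (ρ σ : X → Matrix ι ι ℂ), (∀ x, IsDensity (ρ x)) → (∀ x, IsDensity (σ x)) →
    𝒟.D (cqState p ρ) (cqState p σ) = ∑ x, p x * 𝒟.D (ρ x) (σ x)

/-- The generalized channel divergence: optimization over pure inputs with reference R ≅ A. -/
def chanDiv (𝒟 : GenDivergence) {A B : Type} [Fintype A] [DecidableEq A]
    [Fintype B] [DecidableEq B] (Φ Ψ : Matrix A A ℂ →ₗ[ℂ] Matrix B B ℂ) : ℝ :=
  ⨆ v : {v : A × A → ℂ // IsDensity (vecState v)},
    𝒟.D (idTensor Φ (vecState v.1)) (idTensor Ψ (vecState v.1))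

/-- The maximally entangled state on A ⊗ A. -/
def maxEnt (A : Type) [Fintype A] [DecidableEq A] : Matrix (A × A) (A × A) ℂ :=
  vecState (fun p => if p.1 = p.2 then (((Real.sqrt (Fintype.card A))⁻¹ : ℝ) : ℂ) else 0)

/-- The Choi operator of a linear map on matrices. -/
def choi {A B : Type} [Fintype A] [DecidableEq A]
    (Φ : Matrix A A ℂ →ₗ[ℂ] Matrix B B ℂ) : Matrix (A × B) (A × B) ℂ :=
  idTensor Φ (Matrix.of fun p q => if p.1 = p.2 ∧ q.1 = q.2 then 1 else 0)

/-- Separability of a bipartite operator: a finite sum of tensor products of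
positive semidefinite operators. -/
def IsSepState {A B : Type} [Fintype A] [Fintype B]
    (M : Matrix (A × B) (A × B) ℂ) : Prop :=
  ∃ (k : ℕ) (P : Fin k → Matrix A A ℂ) (Q : Fin k → Matrix B B ℂ),
    (∀ i, (P i).PosSemidef) ∧ (∀ i, (Q i).PosSemidef) ∧ M = ∑ i, P i ⊗ₖ Q i

/-- An entanglement-breaking channel: a channel whose Choi operator is separable. -/
def IsEBChannel {A B : Type} [Fintype A] [DecidableEq A] [Fintype B]
    (Φ : Matrix A A ℂ →ₗ[ℂ] Matrix B B ℂ) : Prop :=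
  IsCPTP Φ ∧ IsSepState (choi Φ)

/-- φ is a purification (with reference system R on the left) of the state ρ. -/
def IsPurification {R A : Type} [Fintype R] [Fintype A]
    (φ : Matrix (R × A) (R × A) ℂ) (ρ : Matrix A A ℂ) : Prop :=
  (∃ v : R × A → ℂ, φ = vecState v) ∧ IsDensity φ ∧ ptraceLeft φ = ρ

/-- The channel ρ ↦ tr_E (V ρ Vᴴ) induced by an isometry V : A → B ⊗ E. -/
def dilMap {A B E : Type} [Fintype A] [Fintype B] [Fintype E]
    (V : Matrix (B × E) A ℂ) : Matrix A A ℂ →ₗ[ℂ] Matrix B B ℂ where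
  toFun ρ := ptraceRight (V * ρ * Vᴴ)
  map_add' ρ σ := by
    ext a a'
    simp [ptraceRight, Matrix.mul_add, Matrix.add_mul, Matrix.add_apply,
      Finset.sum_add_distrib]
  map_smul' c ρ := by
    ext a a'
    simp [ptraceRight, Matrix.mul_smul, Matrix.smul_mul, Matrix.smul_apply,
      Finset.mul_sum, smul_eq_mul]

/-- The complementary channel ρ ↦ tr_B (V ρ Vᴴ) induced by an isometry V : A → B ⊗ E. -/
def complMap {A B E : Type} [Fintype A] [Fintype B] [Fintype E]
    (V : Matrix (B × E) A ℂ) : Matrix A A ℂ →ₗ[ℂ] Matrix E E ℂ where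
  toFun ρ := ptraceLeft (V * ρ * Vᴴ)
  map_add' ρ σ := by
    ext a a'
    simp [ptraceLeft, Matrix.mul_add, Matrix.add_mul, Matrix.add_apply,
      Finset.sum_add_distrib]
  map_smul' c ρ := by
    ext a a'
    simp [ptraceLeft, Matrix.mul_smul, Matrix.smul_mul, Matrix.smul_apply,
      Finset.mul_sum, smul_eq_mul]

/-- A Hadamard channel: some Stinespring dilation has entanglement-breaking complement. -/
def IsHadamardChan {A B : Type} [Fintype A] [DecidableEq A] [Fintype B] [DecidableEq B]
    (Φ : Matrix A A ℂ →ₗ[ℂ] Matrix B B ℂ) : Prop :=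
  ∃ (e : ℕ) (V : Matrix (B × Fin e) A ℂ), Vᴴ * V = 1 ∧
    (∀ ρ, Φ ρ = ptraceRight (V * ρ * Vᴴ)) ∧ IsSepState (choi (complMap V))

/-- Covariance of a channel with respect to unitary representations of a group. -/
def CovariantChan {G A B : Type} [Group G] [Fintype A] [DecidableEq A]
    [Fintype B] [DecidableEq B]
    (U : G →* Matrix.unitaryGroup A ℂ) (V : G →* Matrix.unitaryGroup B ℂ)
    (Φ : Matrix A A ℂ →ₗ[ℂ] Matrix B B ℂ) : Prop :=
  ∀ (g : G) (ρ : Matrix A A ℂ),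
    (V g : Matrix B B ℂ) * Φ ρ * (V g : Matrix B B ℂ)ᴴ
      = Φ ((U g : Matrix A A ℂ) * ρ * (U g : Matrix A A ℂ)ᴴ)

/-- A unitary 1-design: averaging over the group sends every matrix to tr(ρ)·I/d. -/
def IsOneDesign {G A : Type} [Group G] [Fintype G] [Fintype A] [DecidableEq A]
    (U : G →* Matrix.unitaryGroup A ℂ) : Prop :=
  ∀ ρ : Matrix A A ℂ,
    (Fintype.card G : ℂ)⁻¹ • ∑ g, (U g : Matrix A A ℂ) * ρ * (U g : Matrix A A ℂ)ᴴ
      = (ρ.trace * (Fintype.card A : ℂ)⁻¹) • (1 : Matrix A A ℂ)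

/-- Pauli X. -/
def σX : Mat 2 := !![0, 1; 1, 0]
/-- Pauli Y. -/
def σY : Mat 2 := !![0, -Complex.I; Complex.I, 0]
/-- Pauli Z. -/
def σZ : Mat 2 := !![1, 0; 0, -1]

/-- The Pauli twirl of a qubit channel. -/
def pauliTwirl (Φ : Mat 2 →ₗ[ℂ] Mat 2) : Mat 2 →ₗ[ℂ] Mat 2 :=
  ((4 : ℂ)⁻¹) • (Φ + conjMap σX ∘ₗ Φ ∘ₗ conjMap σX + conjMap σY ∘ₗ Φ ∘ₗ conjMap σY
    + conjMap σZ ∘ₗ Φ ∘ₗ conjMap σZ)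

/-- The amplitude damping channel with damping parameter p. -/
def ampDamp (p : ℝ) : Mat 2 →ₗ[ℂ] Mat 2 :=
  conjMap (!![1, 0; 0, ((Real.sqrt (1 - p) : ℝ) : ℂ)] : Mat 2)
    + conjMap (!![0, ((Real.sqrt p : ℝ) : ℂ); 0, 0] : Mat 2)

/-- The qubit depolarizing channel with parameter p. -/
def depol (p : ℝ) : Mat 2 →ₗ[ℂ] Mat 2 :=
  (((1 - p : ℝ) : ℂ)) • LinearMap.id
    + (((p / 3 : ℝ) : ℂ)) • (conjMap σX + conjMap σY + conjMap σZ)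

/-- The Z-dephasing channel with parameter p. -/
def deph (p : ℝ) : Mat 2 →ₗ[ℂ] Mat 2 :=
  (((1 - p : ℝ) : ℂ)) • LinearMap.id + ((p : ℝ) : ℂ) • conjMap σZ

/-- The entanglement-breaking parameter: distance to the nearest EB channel. -/
def ebParam {A B : Type} [Fintype A] [DecidableEq A] [Fintype B] [DecidableEq B]
    (Φ : Matrix A A ℂ →ₗ[ℂ] Matrix B B ℂ) : ℝ :=
  ⨅ M : {M : Matrix A A ℂ →ₗ[ℂ] Matrix B B ℂ // IsEBChannel M}, diamondDist Φ M.1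

end

noncomputable section TPDAux

open Matrix

/-- Kronecker-style product on product indices. -/
def kp {R R' A A' : Type} (K : Matrix R' R ℂ) (C : Matrix A' A ℂ) :
    Matrix (R' × A') (R × A) ℂ :=
  Matrix.of fun p q => K p.1 q.1 * C p.2 q.2

lemma kp_apply {R R' A A' : Type} (K : Matrix R' R ℂ) (C : Matrix A' A ℂ)
    (p : R' × A') (q : R × A) : kp K C p q = K p.1 q.1 * C p.2 q.2 := rfl

lemma kp_mul {R R' R'' A A' A'' : Type} [Fintype R'] [Fintype A']
    (K : Matrix R'' R' ℂ) (C : Matrix A'' A' ℂ) (K' : Matrix R' R ℂ) (C' : Matrix A' A ℂ) :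
    kp K C * kp K' C' = kp (K * K') (C * C') := by
  ext p q
  simp only [kp, Matrix.of_apply, Matrix.mul_apply, Fintype.sum_prod_type,
    Finset.sum_mul_sum]
  rw [Finset.sum_sigma', Finset.sum_sigma']
  refine Finset.sum_congr rfl fun x _ => ?_
  ring

lemma kp_conjTranspose {R R' A A' : Type} (K : Matrix R' R ℂ) (C : Matrix A' A ℂ) :
    (kp K C)ᴴ = kp Kᴴ Cᴴ := by
  ext p q
  simp [kp, Matrix.conjTranspose_apply, star_mul', mul_comm]

lemma kp_one_one {R A : Type} [DecidableEq R] [DecidableEq A] :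
    kp (1 : Matrix R R ℂ) (1 : Matrix A A ℂ) = 1 := by
  ext p q
  by_cases h1 : p.1 = q.1 <;> by_cases h2 : p.2 = q.2 <;>
    simp [kp, Matrix.one_apply, Prod.ext_iff, h1, h2]

lemma kp_sum_left {R R' A : Type} {J : Type} (s : Finset J)
    (K : J → Matrix R' R ℂ) (C : Matrix A A ℂ) :
    ∑ j ∈ s, kp (K j) C = kp (∑ j ∈ s, K j) C := by
  ext p q
  simp [kp, Matrix.sum_apply, Finset.sum_mul]

lemma kp_add_left {R R' A : Type} (K K' : Matrix R' R ℂ) (C : Matrix A A ℂ) :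
    kp K C + kp K' C = kp (K + K') C := by
  ext p q
  simp [kp, Matrix.add_apply, add_mul]

/-- The (r,r') block of a bipartite matrix. -/
def blk {R A : Type} (M : Matrix (R × A) (R × A) ℂ) (r r' : R) : Matrix A A ℂ :=
  Matrix.of fun a a' => M (r, a) (r', a')

lemma idTensor_apply' {R A B : Type} (Φ : Matrix A A ℂ →ₗ[ℂ] Matrix B B ℂ)
    (M : Matrix (R × A) (R × A) ℂ) (p q : R × B) :
    idTensor Φ M p q = Φ (blk M p.1 q.1) p.2 q.2 := rfl

lemma blk_idTensor {R A B : Type} (Φ : Matrix A A ℂ →ₗ[ℂ] Matrix B B ℂ)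
    (M : Matrix (R × A) (R × A) ℂ) (r r' : R) :
    blk (idTensor Φ M) r r' = Φ (blk M r r') := rfl

lemma idTensor_id {R A : Type} (M : Matrix (R × A) (R × A) ℂ) :
    idTensor (LinearMap.id : Matrix A A ℂ →ₗ[ℂ] Matrix A A ℂ) M = M := by
  ext ⟨r, a⟩ ⟨r', a'⟩; rfl

lemma idTensor_comp {R A B C : Type} (Φ : Matrix B B ℂ →ₗ[ℂ] Matrix C C ℂ)
    (Ψ : Matrix A A ℂ →ₗ[ℂ] Matrix B B ℂ) (M : Matrix (R × A) (R × A) ℂ) :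
    idTensor (Φ ∘ₗ Ψ) M = idTensor Φ (idTensor Ψ M) := by
  ext p q
  rfl

lemma idTensor_sum {R A B J : Type} (s : Finset J)
    (Φ : J → (Matrix A A ℂ →ₗ[ℂ] Matrix B B ℂ)) (M : Matrix (R × A) (R × A) ℂ) :
    idTensor (∑ j ∈ s, Φ j) M = ∑ j ∈ s, idTensor (Φ j) M := by
  ext p q
  simp [idTensor, Matrix.sum_apply, LinearMap.sum_apply]

lemma conjMap_apply {ι κ : Type} [Fintype ι] [Fintype κ] (W : Matrix κ ι ℂ)
    (ρ : Matrix ι ι ℂ) : conjMap W ρ = W * ρ * Wᴴ := rfl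

end TPDAux

noncomputable section TPDAux2

open Matrix

lemma kp_one_mul_apply {R R' C : Type} [Fintype R] [Fintype C] [DecidableEq C] {Y : Type}
    (K : Matrix R' R ℂ) (X : Matrix (R × C) Y ℂ) (p : R' × C) (y : Y) :
    (kp K (1 : Matrix C C ℂ) * X) p y = ∑ s, K p.1 s * X (s, p.2) y := by
  rw [Matrix.mul_apply, Fintype.sum_prod_type]
  refine Finset.sum_congr rfl fun s _ => ?_
  simp [kp, Matrix.one_apply, mul_ite, ite_mul, Finset.sum_ite_eq]

lemma mul_kp_one_T_apply {R R' C : Type} [Fintype R] [Fintype C] [DecidableEq C] {Y : Type}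
    (K : Matrix R' R ℂ) (X : Matrix Y (R × C) ℂ) (y : Y) (q : R' × C) :
    (X * (kp K (1 : Matrix C C ℂ))ᴴ) y q = ∑ s', X y (s', q.2) * star (K q.1 s') := by
  rw [Matrix.mul_apply, Fintype.sum_prod_type]
  refine Finset.sum_congr rfl fun s' _ => ?_
  simp only [Matrix.conjTranspose_apply, kp, Matrix.of_apply, Matrix.one_apply, star_mul']
  simp [apply_ite (star : ℂ → ℂ), mul_ite, ite_mul, Finset.sum_ite_eq]

lemma conj_kp_one_apply {R R' C : Type} [Fintype R] [Fintype C] [DecidableEq C]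
    (K : Matrix R' R ℂ) (X : Matrix (R × C) (R × C) ℂ) (p q : R' × C) :
    (kp K (1 : Matrix C C ℂ) * X * (kp K (1 : Matrix C C ℂ))ᴴ) p q
      = ∑ s, ∑ s', K p.1 s * star (K q.1 s') * X (s, p.2) (s', q.2) := by
  rw [mul_kp_one_T_apply]
  rw [show (∑ s, ∑ s', K p.1 s * star (K q.1 s') * X (s, p.2) (s', q.2))
      = ∑ s', ∑ s, K p.1 s * star (K q.1 s') * X (s, p.2) (s', q.2) from Finset.sum_comm]
  refine Finset.sum_congr rfl fun s' _ => ?_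
  rw [kp_one_mul_apply, Finset.sum_mul]
  refine Finset.sum_congr rfl fun s _ => ?_
  ring

lemma blk_conj_kp_one {R R' A : Type} [Fintype R] [Fintype A] [DecidableEq A]
    (K : Matrix R' R ℂ) (M : Matrix (R × A) (R × A) ℂ) (r r' : R') :
    blk (kp K (1 : Matrix A A ℂ) * M * (kp K (1 : Matrix A A ℂ))ᴴ) r r'
      = ∑ s, ∑ s', (K r s * star (K r' s')) • blk M s s' := by
  ext a a'
  rw [blk, Matrix.of_apply]
  rw [conj_kp_one_apply]
  simp only [Matrix.sum_apply, Matrix.smul_apply, smul_eq_mul, blk, Matrix.of_apply]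

lemma conj_kp_one_idTensor {R R' A B : Type} [Fintype R] [Fintype A] [Fintype B]
    [DecidableEq A] [DecidableEq B]
    (Φ : Matrix A A ℂ →ₗ[ℂ] Matrix B B ℂ) (K : Matrix R' R ℂ)
    (M : Matrix (R × A) (R × A) ℂ) :
    kp K (1 : Matrix B B ℂ) * idTensor Φ M * (kp K (1 : Matrix B B ℂ))ᴴ
      = idTensor Φ (kp K (1 : Matrix A A ℂ) * M * (kp K (1 : Matrix A A ℂ))ᴴ) := by
  ext p q
  rw [conj_kp_one_apply, idTensor_apply', blk_conj_kp_one, map_sum]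
  simp only [map_sum, LinearMap.map_smul, Matrix.sum_apply, Matrix.smul_apply, smul_eq_mul]
  refine Finset.sum_congr rfl fun s _ => Finset.sum_congr rfl fun s' _ => ?_
  rw [idTensor_apply']

lemma kp_oneL_mul_apply {R A B' : Type} [Fintype A] [Fintype R] [DecidableEq R] {Y : Type}
    (L : Matrix B' A ℂ) (X : Matrix (R × A) Y ℂ) (p : R × B') (y : Y) :
    (kp (1 : Matrix R R ℂ) L * X) p y = ∑ c, L p.2 c * X (p.1, c) y := by
  rw [Matrix.mul_apply, Fintype.sum_prod_type]
  simp only [kp, Matrix.of_apply, Matrix.one_apply, ite_mul, one_mul, zero_mul]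
  rw [Finset.sum_comm]
  simp [Finset.sum_ite_eq]

lemma mul_kp_oneL_T_apply {R A B' : Type} [Fintype A] [Fintype R] [DecidableEq R] {Y : Type}
    (L : Matrix B' A ℂ) (X : Matrix Y (R × A) ℂ) (y : Y) (q : R × B') :
    (X * (kp (1 : Matrix R R ℂ) L)ᴴ) y q = ∑ c', X y (q.1, c') * star (L q.2 c') := by
  rw [Matrix.mul_apply, Fintype.sum_prod_type]
  simp only [Matrix.conjTranspose_apply, kp, Matrix.of_apply, Matrix.one_apply, star_mul',
    apply_ite (star : ℂ → ℂ), star_one, star_zero, mul_ite, ite_mul, zero_mul, mul_zero]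
  rw [Finset.sum_comm]
  simp [Finset.sum_ite_eq]

lemma conj_kp_oneL_idTensor {R A B B' : Type} [Fintype R] [Fintype A] [Fintype B] [Fintype B']
    [DecidableEq R] [DecidableEq B]
    (Φ : Matrix A A ℂ →ₗ[ℂ] Matrix B B ℂ) (L : Matrix B' B ℂ)
    (M : Matrix (R × A) (R × A) ℂ) :
    kp (1 : Matrix R R ℂ) L * idTensor Φ M * (kp (1 : Matrix R R ℂ) L)ᴴ
      = idTensor (conjMap L ∘ₗ Φ) M := by
  ext p q
  rw [mul_kp_oneL_T_apply]
  have hrow : ∀ c', (kp (1 : Matrix R R ℂ) L * idTensor Φ M) p (q.1, c')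
      = ∑ c, L p.2 c * (Φ (blk M p.1 q.1)) c c' := by
    intro c'; rw [kp_oneL_mul_apply]; rfl
  simp only [hrow]
  rw [idTensor_apply', LinearMap.comp_apply, conjMap_apply, Matrix.mul_apply]
  refine Finset.sum_congr rfl fun c' _ => ?_
  rw [Matrix.mul_apply, Matrix.conjTranspose_apply, Finset.sum_mul]

lemma idTensor_conjMap {R A B : Type} [Fintype R] [Fintype A] [Fintype B]
    [DecidableEq R] [DecidableEq A]
    (C : Matrix B A ℂ) (M : Matrix (R × A) (R × A) ℂ) :
    idTensor (conjMap C) M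
      = kp (1 : Matrix R R ℂ) C * M * (kp (1 : Matrix R R ℂ) C)ᴴ := by
  have h := conj_kp_oneL_idTensor (LinearMap.id : Matrix A A ℂ →ₗ[ℂ] Matrix A A ℂ) C M
  rw [idTensor_id, LinearMap.comp_id] at h
  exact h.symm

lemma mul_vecState {ι κ : Type} [Fintype ι] (Am : Matrix κ ι ℂ) (v : ι → ℂ) :
    Am * vecState v * Amᴴ = vecState (Am *ᵥ v) := by
  ext i j
  simp only [vecState, Matrix.of_apply, Matrix.mul_apply, Matrix.conjTranspose_apply,
    Matrix.mulVec, dotProduct, Finset.sum_mul, star_sum]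
  rw [Finset.sum_comm]
  refine Finset.sum_congr rfl fun k _ => ?_
  rw [Finset.mul_sum]
  refine Finset.sum_congr rfl fun l _ => ?_
  simp only [star_mul']
  ring

lemma vecState_smul {ι : Type} (c : ℂ) (v : ι → ℂ) :
    vecState (c • v) = (c * star c) • vecState v := by
  ext i j
  simp only [vecState, Matrix.of_apply, Pi.smul_apply, smul_eq_mul, star_mul',
    Matrix.smul_apply]
  ring

end TPDAux2

noncomputable section TPDAux3

open Matrix

lemma trace_idTensor {R A B : Type} [Fintype R] [Fintype A] [Fintype B]
    (Φ : Matrix A A ℂ →ₗ[ℂ] Matrix B B ℂ) (h : ∀ X, (Φ X).trace = X.trace)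
    (M : Matrix (R × A) (R × A) ℂ) : (idTensor Φ M).trace = M.trace := by
  have h1 : (idTensor Φ M).trace = ∑ r, (Φ (blk M r r)).trace := by
    simp [Matrix.trace, Matrix.diag, Fintype.sum_prod_type, idTensor_apply']
  rw [h1]
  simp only [h]
  simp [Matrix.trace, Matrix.diag, Fintype.sum_prod_type, blk]

lemma ptraceLeft_idTensor {R A B : Type} [Fintype R] [Fintype A] [Fintype B]
    (Φ : Matrix A A ℂ →ₗ[ℂ] Matrix B B ℂ) (M : Matrix (R × A) (R × A) ℂ) :
    ptraceLeft (idTensor Φ M) = Φ (ptraceLeft M) := by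
  have h1 : ptraceLeft M = ∑ r, blk M r r := by
    ext a a'; simp [ptraceLeft, blk, Matrix.sum_apply]
  rw [h1, map_sum]
  ext a a'
  simp [ptraceLeft, idTensor_apply', Matrix.sum_apply]

lemma cptp_posSemidef {A B R : Type} [Fintype A] [Fintype B] [Fintype R]
    {Φ : Matrix A A ℂ →ₗ[ℂ] Matrix B B ℂ} (h : IsCPTP Φ)
    {M : Matrix (R × A) (R × A) ℂ} (hM : M.PosSemidef) : (idTensor Φ M).PosSemidef := by
  classical
  let e := Fintype.equivFin R
  let f : Fin (Fintype.card R) × A → R × A := fun p => (e.symm p.1, p.2)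
  have h1 : (M.submatrix f f).PosSemidef := hM.submatrix f
  have h2 := h.1 (Fintype.card R) _ h1
  have h3 : idTensor Φ (M.submatrix f f)
      = (idTensor Φ M).submatrix (fun p : Fin (Fintype.card R) × B => ((e.symm p.1 : R), p.2))
          (fun p : Fin (Fintype.card R) × B => ((e.symm p.1 : R), p.2)) := by
    ext p q; rfl
  rw [h3] at h2
  have h4 := h2.submatrix (fun p : R × B => ((e p.1 : Fin (Fintype.card R)), p.2))
  have h5 : (((idTensor Φ M).submatrix
        (fun p : Fin (Fintype.card R) × B => ((e.symm p.1 : R), p.2))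
        (fun p : Fin (Fintype.card R) × B => ((e.symm p.1 : R), p.2))).submatrix
        (fun p : R × B => ((e p.1 : Fin (Fintype.card R)), p.2))
        (fun p : R × B => ((e p.1 : Fin (Fintype.card R)), p.2)))
      = idTensor Φ M := by
    ext p q
    simp [Matrix.submatrix_apply]
  rwa [h5] at h4

lemma kraus_isCPTP {ι κ J : Type} [Fintype ι] [DecidableEq ι] [Fintype κ] [Fintype J]
    (K : J → Matrix κ ι ℂ) (hK : ∑ j, (K j)ᴴ * K j = 1) :
    IsCPTP (∑ j, conjMap (K j)) := by
  classical
  constructor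
  · intro r M hM
    rw [idTensor_sum]
    refine Finset.sum_induction _ _ (fun a b ha hb => ha.add hb) Matrix.PosSemidef.zero
      fun j _ => ?_
    rw [idTensor_conjMap]
    exact hM.mul_mul_conjTranspose_same _
  · intro X
    rw [LinearMap.sum_apply, Matrix.trace_sum]
    have h1 : ∀ j, (conjMap (K j) X).trace = ((K j)ᴴ * K j * X).trace := by
      intro j
      rw [conjMap_apply, Matrix.trace_mul_cycle]
    simp only [h1]
    rw [← Matrix.trace_sum]
    have h2 : ∑ j, (K j)ᴴ * K j * X = (∑ j, (K j)ᴴ * K j) * X := by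
      rw [Finset.sum_mul]
    rw [h2, hK, Matrix.one_mul]

lemma exists_pinv {ι : Type} [Fintype ι] [DecidableEq ι] {Q : Matrix ι ι ℂ}
    (hQ : Q.IsHermitian) :
    ∃ P : Matrix ι ι ℂ, Pᴴ = P ∧ Q * P * Q = Q ∧ P * Q * P = P := by
  classical
  set Uq : Matrix ι ι ℂ := (hQ.eigenvectorUnitary : Matrix ι ι ℂ) with hUq
  have hU1 : Uqᴴ * Uq = 1 := by
    rw [← Matrix.star_eq_conjTranspose]
    exact hQ.eigenvectorUnitary.2.1
  have hU2 : Uq * Uqᴴ = 1 := by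
    rw [← Matrix.star_eq_conjTranspose]
    exact hQ.eigenvectorUnitary.2.2
  have hcan1 : ∀ X : Matrix ι ι ℂ, Uqᴴ * (Uq * X) = X := by
    intro X; rw [← Matrix.mul_assoc, hU1, Matrix.one_mul]
  set D : Matrix ι ι ℂ := Matrix.diagonal (RCLike.ofReal ∘ hQ.eigenvalues) with hD
  set Dp : Matrix ι ι ℂ :=
    Matrix.diagonal (fun i => (RCLike.ofReal (hQ.eigenvalues i)⁻¹ : ℂ)) with hDp
  have hspec : Q = Uq * D * Uqᴴ := by
    rw [hD, hUq, ← Matrix.star_eq_conjTranspose]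
    exact hQ.spectral_theorem
  have hDDD : D * (Dp * D) = D := by
    rw [hD, hDp, Matrix.diagonal_mul_diagonal, Matrix.diagonal_mul_diagonal]
    refine congrArg Matrix.diagonal (funext fun i => ?_)
    rcases eq_or_ne (hQ.eigenvalues i) 0 with h | h
    · simp [Function.comp, h]
    · have hne : (RCLike.ofReal (hQ.eigenvalues i) : ℂ) ≠ 0 := RCLike.ofReal_ne_zero.mpr h
      simp only [Function.comp]
      rw [RCLike.ofReal_inv, inv_mul_cancel₀ hne, mul_one]
  have hDpD : Dp * (D * Dp) = Dp := by
    rw [hD, hDp, Matrix.diagonal_mul_diagonal, Matrix.diagonal_mul_diagonal]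
    refine congrArg Matrix.diagonal (funext fun i => ?_)
    rcases eq_or_ne (hQ.eigenvalues i) 0 with h | h
    · simp [Function.comp, h]
    · have hne : (RCLike.ofReal (hQ.eigenvalues i) : ℂ) ≠ 0 := RCLike.ofReal_ne_zero.mpr h
      simp only [Function.comp]
      rw [RCLike.ofReal_inv, mul_inv_cancel₀ hne, mul_one]
  refine ⟨Uq * Dp * Uqᴴ, ?_, ?_, ?_⟩
  · rw [Matrix.conjTranspose_mul, Matrix.conjTranspose_mul, Matrix.conjTranspose_conjTranspose]
    have : Dpᴴ = Dp := by
      rw [hDp, Matrix.diagonal_conjTranspose]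
      refine congrArg Matrix.diagonal (funext fun i => ?_)
      simp [Pi.star_apply, RCLike.star_def, RCLike.conj_ofReal]
    rw [this, Matrix.mul_assoc]
  · rw [hspec]
    simp only [Matrix.mul_assoc, hcan1]
    rw [show D * (Dp * (D * Uqᴴ)) = D * (Dp * D) * Uqᴴ from by simp only [Matrix.mul_assoc]]
    rw [hDDD]
  · rw [hspec]
    simp only [Matrix.mul_assoc, hcan1]
    rw [show Dp * (D * (Dp * Uqᴴ)) = Dp * (D * Dp) * Uqᴴ from by simp only [Matrix.mul_assoc]]
    rw [hDpD]

lemma vecState_posSemidef {ι : Type} [Fintype ι] (v : ι → ℂ) : (vecState v).PosSemidef := by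
  have h : vecState v
      = (Matrix.of fun (_ : Unit) i => star (v i))ᴴ * (Matrix.of fun (_ : Unit) i => star (v i)) := by
    ext i j
    simp [vecState, Matrix.mul_apply, Matrix.conjTranspose_apply]
  rw [h]
  exact Matrix.posSemidef_conjTranspose_mul_self _

end TPDAux3

noncomputable section TPDAux4

open Matrix

def emb {G m : Type} [DecidableEq G] [DecidableEq m] (g : G) : Matrix (G × m) m ℂ :=
  Matrix.of fun p x => if p = (g, x) then 1 else 0

lemma embT_emb {G m : Type} [Fintype G] [Fintype m] [DecidableEq G] [DecidableEq m] (g : G) :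
    (emb (m := m) g)ᴴ * emb (m := m) g = (1 : Matrix m m ℂ) := by
  ext x y
  rw [Matrix.mul_apply]
  simp only [Matrix.conjTranspose_apply, emb, Matrix.of_apply, apply_ite (star : ℂ → ℂ),
    star_one, star_zero, ite_mul, one_mul, zero_mul]
  rw [Finset.sum_ite_eq' Finset.univ ((g, x) : G × m)]
  simp [Matrix.one_apply, Prod.ext_iff]

lemma emb_conj {G m : Type} [Fintype G] [Fintype m] [DecidableEq G] [DecidableEq m] (g : G)
    (X : Matrix m m ℂ) (p q : G × m) :
    (emb (m := m) g * X * (emb (m := m) g)ᴴ : Matrix (G × m) (G × m) ℂ) p q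
      = if p.1 = g ∧ q.1 = g then X p.2 q.2 else 0 := by
  simp only [Matrix.mul_apply, Matrix.conjTranspose_apply, emb, Matrix.of_apply,
    apply_ite (star : ℂ → ℂ), star_one, star_zero, mul_ite, ite_mul, one_mul, mul_one,
    zero_mul, mul_zero]
  rcases p with ⟨h1, m1⟩
  rcases q with ⟨h2, m2⟩
  simp only [Prod.mk.injEq, ite_and]
  by_cases e1 : h1 = g <;> by_cases e2 : h2 = g <;>
    simp [e1, e2, Finset.sum_ite_eq, Finset.sum_ite_eq']

lemma trace_mul_kp_one {R C : Type} [Fintype R] [Fintype C] [DecidableEq C]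
    (X : Matrix (R × C) (R × C) ℂ) (T : Matrix R R ℂ) :
    (X * kp T (1 : Matrix C C ℂ)).trace = ∑ s, ∑ s', T s' s * (blk X s s').trace := by
  have h1 : ∀ p : R × C, (X * kp T (1 : Matrix C C ℂ)) p p
      = ∑ s', X p (s', p.2) * T s' p.1 := by
    intro p
    rw [Matrix.mul_apply, Fintype.sum_prod_type]
    refine Finset.sum_congr rfl fun s' _ => ?_
    simp [kp, Matrix.one_apply, mul_ite, ite_mul, Finset.sum_ite_eq]
  have h2 : (X * kp T (1 : Matrix C C ℂ)).trace
      = ∑ s, ∑ c, ∑ s', X (s, c) (s', c) * T s' s := by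
    rw [Matrix.trace]
    rw [Fintype.sum_prod_type]
    refine Finset.sum_congr rfl fun s _ => Finset.sum_congr rfl fun c _ => ?_
    exact h1 (s, c)
  rw [h2]
  refine Finset.sum_congr rfl fun s _ => ?_
  rw [Finset.sum_comm]
  refine Finset.sum_congr rfl fun s' _ => ?_
  rw [Matrix.trace, Finset.mul_sum]
  refine Finset.sum_congr rfl fun c _ => ?_
  simp [blk, Matrix.diag, mul_comm]

lemma trace_idTensor_mul_kp_one {R A B : Type} [Fintype R] [Fintype A] [Fintype B]
    [DecidableEq A] [DecidableEq B]
    (Φ : Matrix A A ℂ →ₗ[ℂ] Matrix B B ℂ) (h : ∀ X, (Φ X).trace = X.trace)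
    (M : Matrix (R × A) (R × A) ℂ) (T : Matrix R R ℂ) :
    (idTensor Φ M * kp T (1 : Matrix B B ℂ)).trace
      = (M * kp T (1 : Matrix A A ℂ)).trace := by
  rw [trace_mul_kp_one, trace_mul_kp_one]
  refine Finset.sum_congr rfl fun s _ => Finset.sum_congr rfl fun s' _ => ?_
  rw [blk_idTensor, h]

end TPDAux4

noncomputable section TPDAux5

open Matrix

lemma rank_one_conj {O I : Type} [Fintype I] (ξ : O → ℂ) (Sr : I → ℂ)
    (ω : Matrix I I ℂ) (p p' : O) :
    ((Matrix.of fun (o : O) (q : I) => ξ o * Sr q) * ω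
        * (Matrix.of fun (o : O) (q : I) => ξ o * Sr q)ᴴ) p p'
      = ξ p * star (ξ p') * ∑ q, ∑ q', Sr q * ω q q' * star (Sr q') := by
  rw [Matrix.mul_apply]
  have h1 : ∀ q', ((Matrix.of fun (o : O) (q : I) => ξ o * Sr q) * ω) p q'
      = ∑ q, ξ p * Sr q * ω q q' := by
    intro q'
    rw [Matrix.mul_apply]
    exact Finset.sum_congr rfl fun q _ => rfl
  simp only [h1, Matrix.conjTranspose_apply, Matrix.of_apply, star_mul']
  rw [show (∑ q, ∑ q', Sr q * ω q q' * star (Sr q'))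
      = ∑ q', ∑ q, Sr q * ω q q' * star (Sr q') from Finset.sum_comm]
  simp only [Finset.mul_sum, Finset.sum_mul]
  refine Finset.sum_congr rfl fun q' _ => Finset.sum_congr rfl fun q _ => ?_
  ring

lemma sum_triple_trace {K I : Type} [Fintype K] [Fintype I] (S : Matrix K I ℂ)
    (ω : Matrix I I ℂ) :
    ∑ i, ∑ q, ∑ q', S i q * ω q q' * star (S i q') = (ω * (Sᴴ * S)).trace := by
  rw [Matrix.trace]
  simp only [Matrix.diag, Matrix.mul_apply, Matrix.conjTranspose_apply, Finset.mul_sum]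
  rw [Finset.sum_comm]
  refine Finset.sum_congr rfl fun q _ => ?_
  rw [Finset.sum_comm]
  refine Finset.sum_congr rfl fun q' _ => ?_
  refine Finset.sum_congr rfl fun i _ => ?_
  ring

end TPDAux5

noncomputable section TPDMain

open Matrix

lemma exists_twirl_channel {G A B RA RB : Type} [Group G] [Fintype G] [DecidableEq G]
    [Fintype A] [DecidableEq A] [Fintype B] [DecidableEq B]
    [Fintype RA] [DecidableEq RA] [Fintype RB] [DecidableEq RB]
    [Nonempty RA] [Nonempty B]
    (U : G →* Matrix.unitaryGroup A ℂ) (V : G →* Matrix.unitaryGroup B ℂ)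
    (pG : G → ℝ) (hpG : ∀ g, 0 ≤ pG g)
    (ρ : Matrix A A ℂ)
    (v : RA × A → ℂ) (hφtr : ptraceLeft (vecState v) = ρ)
    (vb : RB × A → ℂ)
    (hφbtr : ptraceLeft (vecState vb)
      = ∑ g, (pG g : ℂ) • ((U g : Matrix A A ℂ) * ρ * (U g : Matrix A A ℂ)ᴴ)) :
    ∃ Λ : Matrix (RB × B) (RB × B) ℂ →ₗ[ℂ] Matrix (G × (RA × B)) (G × (RA × B)) ℂ,
      IsCPTP Λ ∧ ∀ Φ : Matrix A A ℂ →ₗ[ℂ] Matrix B B ℂ, IsCPTP Φ →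
        Λ (idTensor Φ (vecState vb))
          = cqState pG (fun g => idTensor
              (conjMap ((V g : Matrix B B ℂ)ᴴ) ∘ₗ Φ ∘ₗ conjMap (U g : Matrix A A ℂ))
              (vecState v)) := by
  -- basic matrices
  set F : Matrix RB A ℂ := Matrix.of fun s a => vb (s, a) with hF
  set w : G → (RA × A → ℂ) :=
    fun g => (kp (1 : Matrix RA RA ℂ) (U g : Matrix A A ℂ)) *ᵥ v with hw
  set Fψ : Matrix (G × RA) A ℂ :=
    Matrix.of fun p a => ((Real.sqrt (pG p.1) : ℝ) : ℂ) * w p.1 (p.2, a) with hFψ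
  set Q : Matrix A A ℂ := Fᴴ * F with hQdef
  have hQpsd : Q.PosSemidef := by rw [hQdef]; exact Matrix.posSemidef_conjTranspose_mul_self F
  have hQH : Qᴴ = Q := hQpsd.1
  have hwg : ∀ g, vecState (w g)
      = idTensor (conjMap (U g : Matrix A A ℂ)) (vecState v) := by
    intro g
    rw [idTensor_conjMap, mul_vecState, hw]
  have hwptr : ∀ g, ptraceLeft (vecState (w g))
      = (U g : Matrix A A ℂ) * ρ * (U g : Matrix A A ℂ)ᴴ := by
    intro g
    rw [hwg g, ptraceLeft_idTensor, conjMap_apply, hφtr]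
  have hptr : ∀ {R' : Type} [Fintype R'] (u : R' × A → ℂ) (a a' : A),
      ∑ r, star (u (r, a)) * u (r, a') = star (ptraceLeft (vecState u) a a') := by
    intro R' _ u a a'
    simp only [ptraceLeft, vecState, Matrix.of_apply, star_sum, star_mul', star_star]
  have hQa : ∀ a a', Q a a'
      = star ((∑ g, (pG g : ℂ) • ((U g : Matrix A A ℂ) * ρ * (U g : Matrix A A ℂ)ᴴ)) a a') := by
    intro a a'
    rw [← hφbtr, ← hptr vb a a', hQdef, Matrix.mul_apply]
    exact Finset.sum_congr rfl fun s _ => rfl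
  have hsq : ∀ g, ((Real.sqrt (pG g) : ℝ) : ℂ) * ((Real.sqrt (pG g) : ℝ) : ℂ)
      = ((pG g : ℝ) : ℂ) := by
    intro g
    rw [← Complex.ofReal_mul, Real.mul_self_sqrt (hpG g)]
  have hGram : Fψᴴ * Fψ = Q := by
    ext a a'
    rw [Matrix.mul_apply, Fintype.sum_prod_type]
    have hg : ∀ g, ∑ r, Fψᴴ a (g, r) * Fψ (g, r) a'
        = (pG g : ℂ) * star (((U g : Matrix A A ℂ) * ρ * (U g : Matrix A A ℂ)ᴴ) a a') := by
      intro g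
      have h1 : ∀ r, Fψᴴ a (g, r) * Fψ (g, r) a'
          = (pG g : ℂ) * (star (w g (r, a)) * w g (r, a')) := by
        intro r
        rw [Matrix.conjTranspose_apply]
        show star (((Real.sqrt (pG g) : ℝ) : ℂ) * w g (r, a))
            * (((Real.sqrt (pG g) : ℝ) : ℂ) * w g (r, a')) = _
        rw [star_mul']
        rw [show star ((Real.sqrt (pG g) : ℝ) : ℂ) = ((Real.sqrt (pG g) : ℝ) : ℂ) from
          Complex.conj_ofReal _]
        rw [← hsq g]
        ring
      simp only [h1]
      rw [← Finset.mul_sum, hptr (w g) a a', hwptr g]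
    simp only [hg]
    rw [hQa a a', Matrix.sum_apply, star_sum]
    refine Finset.sum_congr rfl fun g _ => ?_
    rw [Matrix.smul_apply, smul_eq_mul, star_mul']
    rw [show star ((pG g : ℝ) : ℂ) = ((pG g : ℝ) : ℂ) from Complex.conj_ofReal _]
  obtain ⟨P, hPh, hQPQ, hPQP⟩ := exists_pinv hQpsd.1
  have hQPQ' : Q * (P * Q) = Q := by rw [← Matrix.mul_assoc]; exact hQPQ
  have hPQP' : P * (Q * P) = P := by rw [← Matrix.mul_assoc]; exact hPQP
  set W : Matrix (G × RA) RB ℂ := Fψ * P * Fᴴ with hWdef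
  have hWF : W * F = Fψ := by
    have h1 : W * F = Fψ * (P * Q) := by
      rw [hWdef, hQdef]
      simp only [Matrix.mul_assoc]
    have hA2 : ((Q * P) * Fψᴴ) * (Fψ * (P * Q)) = Q := by
      simp only [Matrix.mul_assoc]
      rw [show Fψᴴ * (Fψ * (P * Q)) = Q * (P * Q) from by rw [← Matrix.mul_assoc, hGram]]
      rw [hQPQ', hQPQ']
    have hB2 : ((Q * P) * Fψᴴ) * Fψ = Q := by
      simp only [Matrix.mul_assoc]
      rw [hGram, hQPQ']
    have hC2 : Fψᴴ * (Fψ * (P * Q)) = Q := by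
      rw [← Matrix.mul_assoc, hGram, hQPQ']
    have hz : (Fψ * (P * Q) - Fψ)ᴴ * (Fψ * (P * Q) - Fψ) = 0 := by
      have he : (Fψ * (P * Q) - Fψ)ᴴ = (Q * P) * Fψᴴ - Fψᴴ := by
        rw [Matrix.conjTranspose_sub, Matrix.conjTranspose_mul, Matrix.conjTranspose_mul,
          hQH, hPh]
      rw [he, Matrix.sub_mul, Matrix.mul_sub, Matrix.mul_sub, hA2, hB2, hC2, hGram]
      simp
    have h2 : Fψ * (P * Q) - Fψ = 0 := Matrix.conjTranspose_mul_self_eq_zero.mp hz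
    rw [h1, sub_eq_zero.mp h2]
  set Pm : Matrix RB RB ℂ := F * P * Fᴴ with hPmdef
  have hWHW : Wᴴ * W = Pm := by
    rw [hWdef, hPmdef, Matrix.conjTranspose_mul, Matrix.conjTranspose_mul, hPh,
      Matrix.conjTranspose_conjTranspose]
    simp only [Matrix.mul_assoc]
    rw [show Fψᴴ * (Fψ * (P * Fᴴ)) = Q * (P * Fᴴ) from by rw [← Matrix.mul_assoc, hGram]]
    rw [show P * (Q * (P * Fᴴ)) = P * (Q * P) * Fᴴ from by simp only [Matrix.mul_assoc], hPQP']
  have hPmH : Pmᴴ = Pm := by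
    rw [hPmdef, Matrix.conjTranspose_mul, Matrix.conjTranspose_mul, hPh,
      Matrix.conjTranspose_conjTranspose, Matrix.mul_assoc]
  have hPmI : Pm * Pm = Pm := by
    rw [hPmdef]
    simp only [Matrix.mul_assoc]
    rw [show Fᴴ * (F * (P * Fᴴ)) = Q * (P * Fᴴ) from by
      rw [← Matrix.mul_assoc, ← hQdef]]
    rw [show P * (Q * (P * Fᴴ)) = P * (Q * P) * Fᴴ from by simp only [Matrix.mul_assoc], hPQP']
  have hkey : ((1 : Matrix RB RB ℂ) - Pm)ᴴ * ((1 : Matrix RB RB ℂ) - Pm) = 1 - Pm := by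
    rw [Matrix.conjTranspose_sub, Matrix.conjTranspose_one, hPmH, Matrix.sub_mul,
      Matrix.mul_sub, Matrix.mul_sub, Matrix.one_mul, Matrix.mul_one, hPmI]
    simp only [Matrix.one_mul, ← hPmdef]
    abel
  have hpsd1 : ((1 : Matrix RB RB ℂ) - Pm).PosSemidef := by
    rw [← hkey]; exact Matrix.posSemidef_conjTranspose_mul_self _
  obtain ⟨T0, hT0sq, hT0H⟩ : ∃ T0 : Matrix RB RB ℂ, T0 * T0 = 1 - Pm ∧ T0ᴴ = T0 := by
    open scoped MatrixOrder in
    exact ⟨CFC.sqrt (1 - Pm), CFC.sqrt_mul_sqrt_self _ (Matrix.nonneg_iff_posSemidef.mpr hpsd1),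
      (Matrix.nonneg_iff_posSemidef.mp (CFC.sqrt_nonneg _)).1⟩
  -- Kraus operators
  set Wg : G → Matrix RA RB ℂ := fun g => Matrix.of fun r s => W (g, r) s with hWgdef
  set Jg : G → Matrix (RA × B) (RB × B) ℂ :=
    fun g => kp (Wg g) ((V g : Matrix B B ℂ)ᴴ) with hJgdef
  set S : Matrix (RB × B) (RB × B) ℂ := kp T0 (1 : Matrix B B ℂ) with hSdef
  set p0 : G × (RA × B) := (1, Classical.arbitrary (RA × B)) with hp0def
  set ξ : G × (RA × B) → ℂ := fun p => if p = p0 then 1 else 0 with hξdef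
  set Km : G ⊕ (RB × B) → Matrix (G × (RA × B)) (RB × B) ℂ :=
    Sum.elim (fun g => emb (m := RA × B) g * Jg g)
      (fun i => Matrix.of fun p q => ξ p * S i q) with hKmdef
  have hVg : ∀ g, (V g : Matrix B B ℂ) * (V g : Matrix B B ℂ)ᴴ = 1 := by
    intro g; rw [← Matrix.star_eq_conjTranspose]; exact (V g).2.2
  have hWgsum : ∑ g, (Wg g)ᴴ * Wg g = Wᴴ * W := by
    ext s s'
    rw [Matrix.sum_apply]
    have h1 : ∀ g, ((Wg g)ᴴ * Wg g) s s' = ∑ r, star (W (g, r) s) * W (g, r) s' := by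
      intro g
      rw [Matrix.mul_apply]
      refine Finset.sum_congr rfl fun r _ => ?_
      simp [hWgdef]
    simp only [h1]
    rw [Matrix.mul_apply, Fintype.sum_prod_type]
    refine Finset.sum_congr rfl fun g _ => Finset.sum_congr rfl fun r _ => ?_
    rw [Matrix.conjTranspose_apply]
  have hSS : Sᴴ * S = kp ((1 : Matrix RB RB ℂ) - Pm) (1 : Matrix B B ℂ) := by
    rw [hSdef, kp_conjTranspose, Matrix.conjTranspose_one, hT0H, kp_mul, Matrix.one_mul,
      hT0sq]
  have hKsum : ∑ j, (Km j)ᴴ * Km j = 1 := by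
    rw [Fintype.sum_sum_type]
    have hl : ∀ g, (Km (Sum.inl g))ᴴ * Km (Sum.inl g)
        = kp ((Wg g)ᴴ * Wg g) (1 : Matrix B B ℂ) := by
      intro g
      have e0 : Km (Sum.inl g) = emb (m := RA × B) g * kp (Wg g) ((V g : Matrix B B ℂ)ᴴ) := by
        simp [hKmdef, hJgdef]
      rw [e0, Matrix.conjTranspose_mul, Matrix.mul_assoc]
      rw [show (emb (m := RA × B) g)ᴴ * (emb (m := RA × B) g * kp (Wg g) ((V g : Matrix B B ℂ)ᴴ))
          = kp (Wg g) ((V g : Matrix B B ℂ)ᴴ) from by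
        rw [← Matrix.mul_assoc, embT_emb, Matrix.one_mul]]
      rw [kp_conjTranspose, kp_mul, Matrix.conjTranspose_conjTranspose, hVg g]
    have hr : ∀ i : RB × B, (Km (Sum.inr i))ᴴ * Km (Sum.inr i)
        = Matrix.of fun q q' => star (S i q) * S i q' := by
      intro i
      have e0 : Km (Sum.inr i) = Matrix.of fun pp qq => ξ pp * S i qq := by
        simp [hKmdef]
      ext q q'
      rw [e0, Matrix.mul_apply]
      simp only [Matrix.conjTranspose_apply, Matrix.of_apply, star_mul']
      rw [show ∑ p, star (ξ p) * star (S i q) * (ξ p * S i q')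
          = (∑ p, ξ p * star (ξ p)) * (star (S i q) * S i q') from by
        rw [Finset.sum_mul]; exact Finset.sum_congr rfl fun p _ => by ring]
      rw [show ∑ p, ξ p * star (ξ p) = 1 from by
        simp [hξdef, apply_ite (star : ℂ → ℂ), Finset.sum_ite_eq']]
      rw [one_mul]
    simp only [hl, hr]
    rw [kp_sum_left, hWgsum, hWHW]
    have h2 : ∑ i : RB × B, (Matrix.of fun q q' => star (S i q) * S i q') = Sᴴ * S := by
      ext q q'
      rw [Matrix.sum_apply, Matrix.mul_apply]
      exact Finset.sum_congr rfl fun i _ => rfl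
    rw [h2, hSS, kp_add_left]
    rw [show Pm + ((1 : Matrix RB RB ℂ) - Pm) = 1 from by abel]
    exact kp_one_one
  refine ⟨∑ j, conjMap (Km j), kraus_isCPTP Km hKsum, ?_⟩
  intro Φ hΦ
  -- preliminary computations for the action
  have hcc : ∀ g, ((Real.sqrt (pG g) : ℝ) : ℂ) * star ((Real.sqrt (pG g) : ℝ) : ℂ)
      = ((pG g : ℝ) : ℂ) := by
    intro g
    rw [show star ((Real.sqrt (pG g) : ℝ) : ℂ) = ((Real.sqrt (pG g) : ℝ) : ℂ) from
      Complex.conj_ofReal _]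
    exact hsq g
  have hvec : ∀ g, kp (Wg g) (1 : Matrix A A ℂ) *ᵥ vb
      = ((Real.sqrt (pG g) : ℝ) : ℂ) • w g := by
    intro g
    funext p
    have h1 : (kp (Wg g) (1 : Matrix A A ℂ) *ᵥ vb) p = (W * F) (g, p.1) p.2 := by
      show ∑ x : RB × A, kp (Wg g) (1 : Matrix A A ℂ) p x * vb x = (W * F) (g, p.1) p.2
      rw [Matrix.mul_apply, Fintype.sum_prod_type]
      refine Finset.sum_congr rfl fun s _ => ?_
      simp [kp, hWgdef, hF, Matrix.one_apply, mul_ite, ite_mul, Finset.sum_ite_eq]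
    rw [h1, hWF]
    simp [hFψ, Pi.smul_apply, smul_eq_mul]
  have hinl : ∀ g, Km (Sum.inl g) * idTensor Φ (vecState vb) * (Km (Sum.inl g))ᴴ
      = (pG g : ℂ) • (emb (m := RA × B) g * idTensor
          (conjMap ((V g : Matrix B B ℂ)ᴴ) ∘ₗ Φ ∘ₗ conjMap (U g : Matrix A A ℂ))
          (vecState v) * (emb (m := RA × B) g)ᴴ) := by
    intro g
    have e0 : Km (Sum.inl g) = emb (m := RA × B) g * Jg g := by simp [hKmdef]
    have e1 : Km (Sum.inl g) * idTensor Φ (vecState vb) * (Km (Sum.inl g))ᴴ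
        = emb (m := RA × B) g * (Jg g * idTensor Φ (vecState vb) * (Jg g)ᴴ) * (emb (m := RA × B) g)ᴴ := by
      rw [e0, Matrix.conjTranspose_mul]
      simp only [Matrix.mul_assoc]
    have e3 : kp (Wg g) (1 : Matrix B B ℂ) * idTensor Φ (vecState vb)
          * (kp (Wg g) (1 : Matrix B B ℂ))ᴴ
        = (pG g : ℂ) • idTensor Φ (vecState (w g)) := by
      rw [conj_kp_one_idTensor, mul_vecState, hvec g, vecState_smul, hcc g,
        LinearMap.map_smul]
    have e2 : Jg g = kp (1 : Matrix RA RA ℂ) ((V g : Matrix B B ℂ)ᴴ)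
        * kp (Wg g) (1 : Matrix B B ℂ) := by
      rw [hJgdef]
      simp only
      rw [kp_mul, Matrix.one_mul, Matrix.mul_one]
    have e5 : Jg g * idTensor Φ (vecState vb) * (Jg g)ᴴ
        = (pG g : ℂ) • idTensor
            (conjMap ((V g : Matrix B B ℂ)ᴴ) ∘ₗ Φ ∘ₗ conjMap (U g : Matrix A A ℂ))
            (vecState v) := by
      rw [e2, Matrix.conjTranspose_mul]
      rw [show (kp (1 : Matrix RA RA ℂ) ((V g : Matrix B B ℂ)ᴴ)
            * kp (Wg g) (1 : Matrix B B ℂ)) * idTensor Φ (vecState vb)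
            * ((kp (Wg g) (1 : Matrix B B ℂ))ᴴ
              * (kp (1 : Matrix RA RA ℂ) ((V g : Matrix B B ℂ)ᴴ))ᴴ)
          = kp (1 : Matrix RA RA ℂ) ((V g : Matrix B B ℂ)ᴴ)
            * (kp (Wg g) (1 : Matrix B B ℂ) * idTensor Φ (vecState vb)
              * (kp (Wg g) (1 : Matrix B B ℂ))ᴴ)
            * (kp (1 : Matrix RA RA ℂ) ((V g : Matrix B B ℂ)ᴴ))ᴴ from by
        simp only [Matrix.mul_assoc]]
      rw [e3, Matrix.mul_smul, Matrix.smul_mul]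
      congr 1
      rw [hwg g, ← idTensor_comp, conj_kp_oneL_idTensor]
    rw [e1, e5, Matrix.mul_smul, Matrix.smul_mul]
  -- the garbage term vanishes
  have hblkvb : ∀ s s', (blk (vecState vb) s s').trace = (F * Fᴴ) s s' := by
    intro s s'
    rw [Matrix.trace, Matrix.mul_apply]
    refine Finset.sum_congr rfl fun a _ => ?_
    simp [blk, vecState, Matrix.diag, Matrix.conjTranspose_apply, hF]
  have hT : ∀ T : Matrix RB RB ℂ,
      (vecState vb * kp T (1 : Matrix A A ℂ)).trace = ((F * Fᴴ) * T).trace := by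
    intro T
    rw [trace_mul_kp_one, Matrix.trace]
    simp only [Matrix.diag]
    refine Finset.sum_congr rfl fun s _ => ?_
    rw [Matrix.mul_apply]
    refine Finset.sum_congr rfl fun s' _ => ?_
    rw [hblkvb s s']
    ring
  have htrFF : ((F * Fᴴ) * Pm).trace = ((F * Fᴴ) * 1).trace := by
    rw [Matrix.mul_one, ← hWHW]
    rw [show (F * Fᴴ) * (Wᴴ * W) = F * (Fᴴ * (Wᴴ * W)) from by simp only [Matrix.mul_assoc]]
    rw [Matrix.trace_mul_comm]
    rw [show Fᴴ * (Wᴴ * W) * F = Fᴴ * (Wᴴ * (W * F)) from by simp only [Matrix.mul_assoc]]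
    rw [hWF]
    rw [show Fᴴ * (Wᴴ * Fψ) = (W * F)ᴴ * Fψ from by
      rw [Matrix.conjTranspose_mul W F, Matrix.mul_assoc]]
    rw [hWF, hGram, hQdef]
    exact Matrix.trace_mul_comm Fᴴ F
  have htr0 : (idTensor Φ (vecState vb)
      * kp ((1 : Matrix RB RB ℂ) - Pm) (1 : Matrix B B ℂ)).trace = 0 := by
    rw [trace_idTensor_mul_kp_one Φ hΦ.2, hT ((1 : Matrix RB RB ℂ) - Pm),
      Matrix.mul_sub, Matrix.trace_sub, htrFF]
    exact sub_self _
  have hinrsum : ∑ i : RB × B,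
      Km (Sum.inr i) * idTensor Φ (vecState vb) * (Km (Sum.inr i))ᴴ = 0 := by
    ext p p'
    rw [Matrix.sum_apply]
    have hper : ∀ i, (Km (Sum.inr i) * idTensor Φ (vecState vb) * (Km (Sum.inr i))ᴴ) p p'
        = ξ p * star (ξ p') * ∑ q, ∑ q',
            S i q * (idTensor Φ (vecState vb)) q q' * star (S i q') := by
      intro i
      have e0 : Km (Sum.inr i) = Matrix.of fun pp qq => ξ pp * S i qq := by
        simp [hKmdef]
      rw [e0]
      exact rank_one_conj ξ (fun q => S i q) _ p p'
    simp only [hper]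
    rw [← Finset.mul_sum, sum_triple_trace S (idTensor Φ (vecState vb)), hSS, htr0,
      mul_zero]
    simp
  -- assemble
  rw [LinearMap.sum_apply]
  simp only [conjMap_apply]
  rw [Fintype.sum_sum_type]
  rw [hinrsum, add_zero]
  simp only [hinl]
  ext p q
  rw [Matrix.sum_apply]
  simp only [Matrix.smul_apply, smul_eq_mul, emb_conj]
  have hcq : cqState pG (fun g => idTensor
        (conjMap ((V g : Matrix B B ℂ)ᴴ) ∘ₗ Φ ∘ₗ conjMap (U g : Matrix A A ℂ))
        (vecState v)) p q
      = if p.1 = q.1 then (pG p.1 : ℂ) * (idTensor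
          (conjMap ((V p.1 : Matrix B B ℂ)ᴴ) ∘ₗ Φ ∘ₗ conjMap (U p.1 : Matrix A A ℂ))
          (vecState v)) p.2 q.2 else 0 := rfl
  rw [hcq]
  by_cases hpq : p.1 = q.1
  · rw [if_pos hpq]
    rw [Finset.sum_eq_single p.1]
    · rw [if_pos ⟨rfl, hpq.symm⟩]
    · intro g _ hg
      rw [if_neg fun hc => hg hc.1.symm]
      exact mul_zero _
    · intro h
      exact absurd (Finset.mem_univ _) h
  · rw [if_neg hpq]
    refine Finset.sum_eq_zero fun g _ => ?_
    rw [if_neg fun hc => hpq (hc.1.trans hc.2.symm)]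
    exact mul_zero _

end TPDMain
/-- For channels N, M, unitary representations U, V of a finite group G,
a probability distribution p_G, a purification φ of ρ and a purification φ̄ of the group
average ρ̄ = ∑_g p_G(g) U(g) ρ U(g)†, and a generalized divergence D with the direct-sum
property, one has D(N(φ̄)‖M(φ̄)) ≥ ∑_g p_G(g) D(N^g(φ)‖M^g(φ)). -/
theorem twirled_purification_divergence_bound
    {G A B RA RB : Type} [Group G] [Fintype G]
    [Fintype A] [DecidableEq A] [Fintype B] [DecidableEq B]
    [Fintype RA] [DecidableEq RA] [Fintype RB] [DecidableEq RB]
    (U : G →* Matrix.unitaryGroup A ℂ) (V : G →* Matrix.unitaryGroup B ℂ)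
    (N M : Matrix A A ℂ →ₗ[ℂ] Matrix B B ℂ) (hN : IsCPTP N) (hM : IsCPTP M)
    (pG : G → ℝ) (hpG : ∀ g, 0 ≤ pG g) (hpGsum : ∑ g, pG g = 1)
    (ρ : Matrix A A ℂ) (hρ : IsDensity ρ)
    (φ : Matrix (RA × A) (RA × A) ℂ) (hφ : IsPurification φ ρ)
    (φbar : Matrix (RB × A) (RB × A) ℂ)
    (hφbar : IsPurification φbar
      (∑ g, (pG g : ℂ) • ((U g : Matrix A A ℂ) * ρ * (U g : Matrix A A ℂ)ᴴ)))
    (𝒟 : GenDivergence) (hDS : HasDirectSum 𝒟) :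
    ∑ g, pG g *
        𝒟.D (idTensor (conjMap ((V g : Matrix B B ℂ)ᴴ) ∘ₗ N ∘ₗ conjMap (U g : Matrix A A ℂ)) φ)
             (idTensor (conjMap ((V g : Matrix B B ℂ)ᴴ) ∘ₗ M ∘ₗ conjMap (U g : Matrix A A ℂ)) φ)
      ≤ 𝒟.D (idTensor N φbar) (idTensor M φbar) := by
  classical
  letI : DecidableEq G := Classical.decEq G
  obtain ⟨⟨v, hv⟩, hφden, hφtr⟩ := hφ
  obtain ⟨⟨vb, hvb⟩, hφbden, hφbtr⟩ := hφbar
  subst hv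
  subst hvb
  haveI hRA : Nonempty RA := by
    by_contra hne
    rw [not_nonempty_iff] at hne
    haveI : IsEmpty (RA × A) := ⟨fun p => hne.false p.1⟩
    have h0 : (vecState v : Matrix (RA × A) (RA × A) ℂ).trace = 0 := by
      rw [Matrix.trace]; simp
    have h2 := hφden.2
    rw [h0] at h2
    exact zero_ne_one h2
  haveI hB : Nonempty B := by
    by_contra hne
    rw [not_nonempty_iff] at hne
    haveI : IsEmpty B := hne
    have h0 : (N ρ).trace = 0 := by rw [Matrix.trace]; simp
    have h2 := hN.2 ρ
    rw [h0, hρ.2] at h2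
    exact zero_ne_one h2
  obtain ⟨Λ, hΛ, hact⟩ := exists_twirl_channel U V pG hpG ρ v hφtr vb hφbtr
  have hNd : IsDensity (idTensor N (vecState vb)) :=
    ⟨cptp_posSemidef hN hφbden.1, by rw [trace_idTensor N hN.2, hφbden.2]⟩
  have hMpsd : (idTensor M (vecState vb)).PosSemidef := cptp_posSemidef hM hφbden.1
  have hdp := 𝒟.data_proc Λ hΛ _ _ hNd hMpsd
  rw [hact N hN, hact M hM] at hdp
  have hfam : ∀ (Φ : Matrix A A ℂ →ₗ[ℂ] Matrix B B ℂ), IsCPTP Φ → ∀ g,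
      IsDensity (idTensor (conjMap ((V g : Matrix B B ℂ)ᴴ) ∘ₗ Φ
        ∘ₗ conjMap (U g : Matrix A A ℂ)) (vecState v)) := by
    intro Φ hΦ g
    constructor
    · rw [idTensor_comp, idTensor_comp]
      have h1 : (idTensor (conjMap (U g : Matrix A A ℂ)) (vecState v)).PosSemidef := by
        rw [idTensor_conjMap]
        exact (vecState_posSemidef v).mul_mul_conjTranspose_same _
      have h2 := cptp_posSemidef hΦ h1
      rw [idTensor_conjMap]
      exact h2.mul_mul_conjTranspose_same _
    · have hTP : ∀ X : Matrix A A ℂ,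
          ((conjMap ((V g : Matrix B B ℂ)ᴴ) ∘ₗ Φ
            ∘ₗ conjMap (U g : Matrix A A ℂ)) X).trace = X.trace := by
        intro X
        simp only [LinearMap.comp_apply, conjMap_apply]
        rw [Matrix.trace_mul_cycle, Matrix.conjTranspose_conjTranspose]
        rw [show (V g : Matrix B B ℂ) * (V g : Matrix B B ℂ)ᴴ = 1 from by
          rw [← Matrix.star_eq_conjTranspose]; exact (V g).2.2]
        rw [Matrix.one_mul, hΦ.2, Matrix.trace_mul_cycle]
        rw [show (U g : Matrix A A ℂ)ᴴ * (U g : Matrix A A ℂ) = 1 from by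
          rw [← Matrix.star_eq_conjTranspose]; exact (U g).2.1]
        rw [Matrix.one_mul]
      rw [trace_idTensor _ hTP, hφden.2]
  rw [hDS pG hpG hpGsum _ _ (hfam N hN) (hfam M hM)] at hdp
  exact hdp
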